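/- For every α ∈ ℚ̄, we have H(α) ≥ H(H(α)), with equality if and only if H(α) = a^b for some a ∈ ℕ and some positive rational number b. -/

import Mathlib

open Polynomial Filter
open scoped Classical

noncomputable section

/-- The Mahler measure of a complex polynomial. -/
noncomputable def cMahler (p : Polynomial ℂ) : ℝ :=
  ‖p.leadingCoeff‖ * (p.roots.map (fun z => max 1 ‖z‖)).prod

/-- The Mahler measure of an integer polynomial (via its complex roots). -/
noncomputable def zMahler (P : Polynomial ℤ) : ℝ :=
  cMahler (P.map (algebraMap ℤ ℂ))

/-- `P` is a minimal polynomial of `α` in `ℤ[t]` with positive leading coefficient. -/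
def IsIntMinpoly (α : ℂ) (P : Polynomial ℤ) : Prop :=
  Irreducible P ∧ 0 < P.leadingCoeff ∧ Polynomial.aeval α P = 0

/-- The absolute multiplicative Weil height of an algebraic number `α`:
`H(α)^d` equals the Mahler measure of a minimal polynomial of `α` in `ℤ[t]`. -/
noncomputable def height (α : ℂ) : ℝ :=
  if h : ∃ P : Polynomial ℤ, IsIntMinpoly α P
  then zMahler h.choose ^ (((h.choose.natDegree : ℝ))⁻¹)
  else 1

/-- The degree `[ℚ(α):ℚ]` of an algebraic number `α`. -/
noncomputable def degQ (α : ℂ) : ℕ := (minpoly ℚ α).natDegree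

/-- The number of conjugates of `α` lying inside the open unit disk. -/
noncomputable def numConjInDisk (α : ℂ) : ℕ :=
  Multiset.card (((minpoly ℚ α).map (algebraMap ℚ ℂ)).roots.filter
    (fun z => ‖z‖ < 1))

/-- `A(k,d,𝓗)`: algebraic numbers of degree `d`, height `𝓗`, with precisely `k`
conjugates inside the open unit disk. -/
noncomputable def Aset (k d : ℕ) (H : ℝ) : Set ℂ :=
  {α : ℂ | degQ α = d ∧ height α = H ∧ numConjInDisk α = k}

/-- `B(k,d)`: the set of height values of algebraic numbers of degree `d` with
precisely `k` conjugates inside the open unit disk. -/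
noncomputable def Bset (k d : ℕ) : Set ℝ :=
  {x : ℝ | ∃ α : ℂ, degQ α = d ∧ numConjInDisk α = k ∧ height α = x}

/-- `B(k,d,𝓗)`: the height values in `B(k,d)` that are at most `𝓗`. -/
noncomputable def BsetBdd (k d : ℕ) (H : ℝ) : Set ℝ :=
  Bset k d ∩ Set.Iic H

end

lemma degree_reflect_lt (p : Polynomial ℤ) :
    (p.reflect p.natDegree).degree < ((p.natDegree + 1 : ℕ) : WithBot ℕ) := by
  apply lt_of_le_of_lt (b := ((p.natDegree : ℕ) : WithBot ℕ))
  · rw [Polynomial.degree_le_iff_coeff_zero]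
    intro m hm
    have hm' : p.natDegree < m := by exact_mod_cast hm
    rw [Polynomial.coeff_reflect, Polynomial.revAt_eq_self_of_lt hm']
    exact Polynomial.coeff_eq_zero_of_natDegree_lt hm'
  · exact_mod_cast Nat.lt_succ_self p.natDegree

/-- If `x ∈ ℤ[x⁻¹]` and `x ≠ 0`, then `x` is integral over `ℤ`. -/
lemma isIntegral_of_mem_adjoin_inv {x : ℂ} (hx : x ≠ 0)
    (h : x ∈ Algebra.adjoin ℤ ({x⁻¹} : Set ℂ)) : IsIntegral ℤ x := by
  rw [Algebra.adjoin_singleton_eq_range_aeval] at h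
  obtain ⟨p, hp⟩ := h
  have hpx : eval₂ (algebraMap ℤ ℂ) (x⁻¹) p = x := hp
  set N := p.natDegree with hN
  refine ⟨X ^ (N + 1) - p.reflect N, Polynomial.monic_X_pow_sub (degree_reflect_lt p), ?_⟩
  · have hinv : Invertible (x⁻¹) := invertibleOfNonzero (inv_ne_zero hx)
    have key := Polynomial.eval₂_reflect_mul_pow (algebraMap ℤ ℂ) (x⁻¹) N p le_rfl
    have hiv : (⅟(x⁻¹) : ℂ) = x := by
      rw [invOf_eq_inv, inv_inv]
    rw [hiv, hpx] at key
    have hxn : (x⁻¹ : ℂ) ^ N * x ^ N = 1 := by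
      rw [← mul_pow, inv_mul_cancel₀ hx, one_pow]
    have h2 : eval₂ (algebraMap ℤ ℂ) x (p.reflect N) = x * x ^ N := by
      calc eval₂ (algebraMap ℤ ℂ) x (p.reflect N)
          = eval₂ (algebraMap ℤ ℂ) x (p.reflect N) * ((x⁻¹) ^ N * x ^ N) := by
            rw [hxn, mul_one]
        _ = (eval₂ (algebraMap ℤ ℂ) x (p.reflect N) * (x⁻¹) ^ N) * x ^ N := by ring
        _ = x * x ^ N := by rw [key]
    rw [Polynomial.eval₂_sub, Polynomial.eval₂_X_pow, h2, pow_succ]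
    ring

/-- If `x : ℂ` belongs to every valuation subring of `ℂ`, it is integral over `ℤ`. -/
lemma isIntegral_of_mem_all_valuationSubrings {x : ℂ}
    (h : ∀ V : ValuationSubring ℂ, x ∈ V) : IsIntegral ℤ x := by
  by_contra hni
  have hx : x ≠ 0 := by rintro rfl; exact hni isIntegral_zero
  set T : Subring ℂ := (Algebra.adjoin ℤ ({x⁻¹} : Set ℂ)).toSubring with hT
  have hmem : x⁻¹ ∈ T := Algebra.self_mem_adjoin_singleton ℤ _
  set y : T := ⟨x⁻¹, hmem⟩ with hy
  have hJ : Ideal.span ({y} : Set T) ≠ ⊤ := by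
    rw [Ne, Ideal.span_singleton_eq_top]
    intro hu
    obtain ⟨z, hz⟩ := isUnit_iff_exists_inv.mp hu
    have hz1 : x⁻¹ * (z : ℂ) = 1 := congrArg Subtype.val hz
    have hzx : (z : ℂ) = x := by
      field_simp at hz1
      rw [hz1]
    apply hni
    apply isIntegral_of_mem_adjoin_inv hx
    have hz2 := Subalgebra.mem_toSubring.mp z.2
    rwa [hzx] at hz2
  obtain ⟨M, hMmax, hJM⟩ := Ideal.exists_le_maximal _ hJ
  haveI := hMmax.isPrime
  obtain ⟨V, hle, hloc⟩ := (LocalSubring.ofPrime T M).exists_le_valuationSubring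
  have hyM : y ∈ M := hJM (Ideal.subset_span rfl)
  have hnonunit : ¬ IsUnit (algebraMap T (LocalSubring.ofPrime T M).toSubring y) := by
    rw [IsLocalization.AtPrime.isUnit_to_map_iff _ M y]
    exact fun hc => hc hyM
  have hxinv_oP : x⁻¹ ∈ (LocalSubring.ofPrime T M).toSubring :=
    LocalSubring.le_ofPrime T M hmem
  have hxinv_V : x⁻¹ ∈ V.toSubring := hle hxinv_oP
  have hnonunitV : ¬ IsUnit (⟨x⁻¹, hxinv_V⟩ : V.toSubring) := by
    intro hc
    apply hnonunit
    have := hloc.1 (a := ⟨x⁻¹, hxinv_oP⟩) (by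
      exact hc
      )
    exact this
  have hxV : x ∈ V.toSubring := h V
  apply hnonunitV
  refine isUnit_iff_exists_inv.mpr ⟨⟨x, hxV⟩, ?_⟩
  exact Subtype.ext (by simp [inv_mul_cancel₀ hx])

/-- `w` is a nonunit element of the valuation subring `V`. -/
def VSmall (V : ValuationSubring ℂ) (w : ℂ) : Prop :=
  ∃ hw : w ∈ V, ¬ IsUnit (⟨w, hw⟩ : V)

namespace VSmall

variable {V : ValuationSubring ℂ} {w v : ℂ}

lemma mem (h : VSmall V w) : w ∈ V := h.1

lemma zero : VSmall V 0 := ⟨zero_mem _, by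
  intro hc
  exact hc.ne_zero (Subtype.ext rfl)⟩

lemma add (h1 : VSmall V w) (h2 : VSmall V v) : VSmall V (w + v) := by
  obtain ⟨hw, hw'⟩ := h1
  obtain ⟨hv, hv'⟩ := h2
  refine ⟨add_mem hw hv, fun hc => ?_⟩
  exact (mem_nonunits_iff.mp (IsLocalRing.nonunits_add
    (mem_nonunits_iff.mpr hw') (mem_nonunits_iff.mpr hv'))) hc

lemma mul_left (hv : v ∈ V) (h : VSmall V w) : VSmall V (v * w) := by
  obtain ⟨hw, hw'⟩ := h
  refine ⟨mul_mem hv hw, fun hc => hw' ?_⟩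
  have : (⟨v, hv⟩ : V) * ⟨w, hw⟩ = ⟨v * w, mul_mem hv hw⟩ := rfl
  exact isUnit_of_mul_isUnit_right (this ▸ hc)

lemma inv (h : w ∉ V) : VSmall V w⁻¹ := by
  have hinv : w⁻¹ ∈ V := (V.mem_or_inv_mem w).resolve_left h
  have hw0 : w ≠ 0 := by rintro rfl; exact h (by simpa using zero_mem V)
  refine ⟨hinv, fun hc => h ?_⟩
  obtain ⟨t, ht⟩ := isUnit_iff_exists_inv.mp hc
  have ht' : w⁻¹ * (t : ℂ) = 1 := congrArg Subtype.val ht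
  have : (t : ℂ) = w := by field_simp at ht'; rw [ht']
  exact this ▸ t.2

lemma sum {s : Multiset ℂ} (h : ∀ x ∈ s, VSmall V x) : VSmall V s.sum := by
  induction s using Multiset.induction_on with
  | empty => simpa using zero
  | cons a t ih =>
    rw [Multiset.sum_cons]
    exact (h a (Multiset.mem_cons_self a t)).add
      (ih fun x hx => h x (Multiset.mem_cons_of_mem hx))

lemma one_add_unit (h : VSmall V w) : ∃ t, t ∈ V ∧ (1 + w) * t = 1 := by
  obtain ⟨hw, hw'⟩ := h
  have hu : IsUnit (⟨1 + w, add_mem (one_mem _) hw⟩ : V) := by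
    by_contra hnu
    have hneg : ¬ IsUnit (-(⟨w, hw⟩ : V)) := fun hc => hw' (by simpa using hc.neg)
    have h2 := mem_nonunits_iff.mp (IsLocalRing.nonunits_add
      (mem_nonunits_iff.mpr hnu) (mem_nonunits_iff.mpr hneg))
    apply h2
    have h3 : (⟨1 + w, add_mem (one_mem _) hw⟩ : V) + -(⟨w, hw⟩ : V) = 1 := by
      ext; simp
    rw [h3]
    exact isUnit_one
  obtain ⟨t, ht⟩ := isUnit_iff_exists_inv.mp hu
  exact ⟨(t : ℂ), t.2, congrArg Subtype.val ht⟩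

end VSmall

lemma multiset_prod_mem_valuationSubring {V : ValuationSubring ℂ} {s : Multiset ℂ}
    (h : ∀ x ∈ s, x ∈ V) : s.prod ∈ V := by
  induction s using Multiset.induction_on with
  | empty => simpa using one_mem V
  | cons a t ih =>
    rw [Multiset.prod_cons]
    exact mul_mem (h a (Multiset.mem_cons_self a t))
      (ih fun x hx => h x (Multiset.mem_cons_of_mem hx))

lemma multiset_prod_inv {s : Multiset ℂ} : (s.map (fun z : ℂ => z⁻¹)).prod = s.prod⁻¹ := by
  induction s using Multiset.induction_on with
  | empty => simp
  | cons a t ih => simp [ih, mul_inv, mul_comm]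

/-- Key integrality lemma: for an integer polynomial `f` and any sub-multiset `T` of the
complex roots of `f` (assumed distinct), `lc(f) * ∏ T` is an algebraic integer. -/
lemma leadingCoeff_mul_prod_subroots_isIntegral {f : Polynomial ℤ} {T : Multiset ℂ}
    (hnd : ((f.map (algebraMap ℤ ℂ)).roots).Nodup)
    (hT : T ≤ (f.map (algebraMap ℤ ℂ)).roots) :
    IsIntegral ℤ ((f.leadingCoeff : ℂ) * T.prod) := by
  apply isIntegral_of_mem_all_valuationSubrings
  intro V
  set fC := f.map (algebraMap ℤ ℂ) with hfC
  set R := fC.roots with hR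
  set a := f.leadingCoeff with ha
  by_cases ha0 : (a : ℂ) = 0
  · rw [ha0, zero_mul]; exact zero_mem _
  set N := R.filter (fun z => z ∉ V) with hN
  have hNR : N ≤ R := Multiset.filter_le _ _
  set n := Multiset.card N with hn
  have hNne0 : ∀ r ∈ N, r ≠ 0 := by
    intro r hr
    have hrV := (Multiset.mem_filter.mp hr).2
    rintro rfl
    exact hrV (zero_mem V)
  have hNprod_ne : N.prod ≠ 0 := by
    intro hc
    exact hNne0 0 (Multiset.prod_eq_zero_iff.mp hc) rfl
  -- membership of all elements of R outside N in V
  have hmemV : ∀ {W : Multiset ℂ}, W ≤ R → ∀ r ∈ W - (W ∩ N), r ∈ V := by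
    intro W hW r hr
    by_contra hrV
    have h1 : Multiset.count r (W - W ∩ N) ≤ Multiset.count r W - Multiset.count r (W ∩ N) :=
      le_of_eq (Multiset.count_sub _ _ _)
    have hcount : Multiset.count r (W ∩ N) = min (Multiset.count r W) (Multiset.count r N) :=
      Multiset.count_inter _ _ _
    have hrNW : Multiset.count r W ≤ Multiset.count r N := by
      have : Multiset.count r N = Multiset.count r R := by
        rw [hN, Multiset.count_filter, if_pos hrV]
      rw [this]
      exact Multiset.count_le_of_le r hW
    have : Multiset.count r (W - W ∩ N) = 0 := by
      rw [Multiset.count_sub, hcount, min_eq_left hrNW, Nat.sub_self]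
    exact (Multiset.count_eq_zero.mp this) hr
  have hinvN : ∀ r ∈ N, VSmall V r⁻¹ := fun r hr =>
    VSmall.inv (Multiset.mem_filter.mp hr).2
  -- the generic cofactor fact: for W ≤ N, ((N - W').prod)⁻¹ ∈ V etc.
  have hinv_mem : ∀ {W : Multiset ℂ}, W ≤ N → (W.prod)⁻¹ ∈ V := by
    intro W hW
    rw [← multiset_prod_inv]
    apply multiset_prod_mem_valuationSubring
    intro x hx
    obtain ⟨r, hr, rfl⟩ := Multiset.mem_map.mp hx
    exact (hinvN r (Multiset.mem_of_le hW hr)).mem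
  -- Step 1 : u := a * N.prod ∈ V
  have hsplits : fC.Splits := IsAlgClosed.splits fC
  have hinj : Function.Injective (algebraMap ℤ ℂ) := by
    rw [algebraMap_int_eq]
    exact fun x y h => Int.cast_injective h
  have hfC0 : fC ≠ 0 := by
    intro hc
    apply ha0
    have : fC.leadingCoeff = ((a : ℤ) : ℂ) := Polynomial.leadingCoeff_map_of_injective hinj f
    rw [hc] at this
    simpa using this.symm
  have hnR : n ≤ Multiset.card R := Multiset.card_le_card hNR
  set k := Multiset.card R - n with hk
  have hkn : Multiset.card R - k = n := Nat.sub_sub_self hnR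
  have heq : fC = C fC.leadingCoeff * (R.map (fun z => X - C z)).prod :=
    hsplits.eq_prod_roots
  have hlc : fC.leadingCoeff = ((a : ℤ) : ℂ) :=
    Polynomial.leadingCoeff_map_of_injective hinj f
  have hcoeff : ((f.coeff k : ℤ) : ℂ) = (a : ℂ) * ((-1 : ℂ) ^ n * Multiset.esymm R n) := by
    have h1 : fC.coeff k = ((f.coeff k : ℤ) : ℂ) := Polynomial.coeff_map _ _
    rw [← h1]
    conv_lhs => rw [heq]
    rw [Polynomial.coeff_C_mul, hlc]
    congr 1
    have hkle : k ≤ Multiset.card R := by rw [hk]; exact Nat.sub_le _ _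
    have := Multiset.prod_X_sub_C_coeff R hkle
    rw [this, hkn]
  -- decompose the power set
  have hNmem : N ∈ R.powersetCard n := Multiset.mem_powersetCard.mpr ⟨hNR, rfl⟩
  obtain ⟨Q, hQ⟩ := Multiset.exists_cons_of_mem hNmem
  have hQnodup : N ∉ Q := by
    have := hnd.powersetCard (n := n)
    rw [hQ] at this
    exact (Multiset.nodup_cons.mp this).1
  have hesymm : Multiset.esymm R n = N.prod + (Q.map Multiset.prod).sum := by
    rw [Multiset.esymm, hQ, Multiset.map_cons, Multiset.sum_cons]
  -- each other subset contributes a small ratio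
  have hratio : ∀ T' ∈ Q, VSmall V (T'.prod * (N.prod)⁻¹) := by
    intro T' hT'Q
    have hT'mem : T' ∈ R.powersetCard n := by rw [hQ]; exact Multiset.mem_cons_of_mem hT'Q
    obtain ⟨hT'R, hT'card⟩ := Multiset.mem_powersetCard.mp hT'mem
    have hT'N : T' ≠ N := fun hc => hQnodup (hc ▸ hT'Q)
    set I := T' ∩ N with hI
    have hIT : I ≤ T' := Multiset.inter_le_left
    have hIN : I ≤ N := Multiset.inter_le_right
    have hTd : I + (T' - I) = T' := add_tsub_cancel_of_le hIT
    have hNd : I + (N - I) = N := by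
      -- N - I vs N - T' : careful, I = T' ∩ N so N - I makes sense via hIN
      exact add_tsub_cancel_of_le hIN
    have hNInonempty : N - I ≠ 0 := by
      intro hc
      have hle : N ≤ I := tsub_eq_zero_iff_le.mp hc
      have : N ≤ T' := hle.trans hIT
      exact hT'N (Multiset.eq_of_le_of_card_le this (le_of_eq hT'card)).symm
    obtain ⟨r0, hr0⟩ := Multiset.exists_mem_of_ne_zero hNInonempty
    obtain ⟨W, hW⟩ := Multiset.exists_cons_of_mem hr0
    have hr0N : r0 ∈ N := Multiset.mem_of_le (Multiset.sub_le_self N I) hr0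
    have hNIprod_ne : I.prod ≠ 0 := by
      intro hc
      exact hNne0 0 (Multiset.mem_of_le hIN (Multiset.prod_eq_zero_iff.mp hc)) rfl
    have hNmINprod_ne : (N - I).prod ≠ 0 := by
      intro hc
      exact hNne0 0 (Multiset.mem_of_le (Multiset.sub_le_self N I)
        (Multiset.prod_eq_zero_iff.mp hc)) rfl
    have hratio_eq : T'.prod * (N.prod)⁻¹ = (T' - I).prod * ((W.map (fun z : ℂ => z⁻¹)).prod * r0⁻¹) := by
      rw [multiset_prod_inv]
      have e1 : T'.prod = I.prod * (T' - I).prod := by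
        conv_lhs => rw [← hTd]
        rw [Multiset.prod_add]
      have e2 : N.prod = I.prod * (N - I).prod := by
        conv_lhs => rw [← hNd]
        rw [Multiset.prod_add]
      have e3 : (N - I).prod = r0 * W.prod := by rw [hW, Multiset.prod_cons]
      have hW0 : W.prod ≠ 0 := by
        intro hc
        rw [e3, hc, mul_zero] at hNmINprod_ne
        exact hNmINprod_ne rfl
      have hr00 : r0 ≠ 0 := hNne0 r0 hr0N
      rw [e1, e2, e3]
      field_simp
    rw [hratio_eq]
    apply VSmall.mul_left
    · apply multiset_prod_mem_valuationSubring
      intro r hr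
      exact hmemV hT'R r (by rwa [hI] at hr)
    · apply VSmall.mul_left
      · rw [multiset_prod_inv]
        apply hinv_mem
        calc W ≤ r0 ::ₘ W := Multiset.le_cons_self _ _
          _ = N - I := hW.symm
          _ ≤ N := Multiset.sub_le_self N I
      · exact hinvN r0 hr0N
  set σ := (Q.map (fun T' => T'.prod * (N.prod)⁻¹)).sum with hσ
  have hσsmall : VSmall V σ := by
    apply VSmall.sum
    intro x hx
    obtain ⟨T', hT', rfl⟩ := Multiset.mem_map.mp hx
    exact hratio T' hT'
  obtain ⟨t, htV, ht1⟩ := hσsmall.one_add_unit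
  set u := (a : ℂ) * N.prod with hu
  have hue : u * (1 + σ) = (-1 : ℂ) ^ n * ((f.coeff k : ℤ) : ℂ) := by
    have hNσ : N.prod * σ = (Q.map Multiset.prod).sum := by
      rw [hσ, ← Multiset.sum_map_mul_left]
      congr 1
      apply Multiset.map_congr rfl
      intro T' _
      field_simp
    have : u * (1 + σ) = (a : ℂ) * (N.prod + (Q.map Multiset.prod).sum) := by
      rw [hu, mul_add, mul_one, mul_add]
      rw [mul_assoc, hNσ]
    rw [this, ← hesymm, hcoeff]
    have hsq : ((-1 : ℂ) ^ n) * ((-1 : ℂ) ^ n) = 1 := by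
      rw [← pow_add, ← two_mul, pow_mul]
      norm_num
    calc (a : ℂ) * Multiset.esymm R n
        = ((-1:ℂ)^n * (-1:ℂ)^n) * ((a:ℂ) * Multiset.esymm R n) := by rw [hsq, one_mul]
      _ = (-1:ℂ)^n * ((a:ℂ) * ((-1:ℂ)^n * Multiset.esymm R n)) := by ring
  have huV : u ∈ V := by
    have : u = ((-1 : ℂ) ^ n * ((f.coeff k : ℤ) : ℂ)) * t := by
      rw [← hue, mul_assoc, ht1, mul_one]
    rw [this]
    refine mul_mem (mul_mem ?_ ?_) htV
    · exact pow_mem (neg_mem (one_mem _)) n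
    · exact intCast_mem V _
  -- Step 2 : conclude for T
  set J := T ∩ N with hJ
  have hJT : J ≤ T := Multiset.inter_le_left
  have hJN : J ≤ N := Multiset.inter_le_right
  have hfinal : (a : ℂ) * T.prod = u * ((T - J).prod * ((N - J).prod)⁻¹) := by
    have e1 : T.prod = J.prod * (T - J).prod := by
      conv_lhs => rw [← add_tsub_cancel_of_le hJT]
      rw [Multiset.prod_add]
    have e2 : N.prod = J.prod * (N - J).prod := by
      conv_lhs => rw [← add_tsub_cancel_of_le hJN]
      rw [Multiset.prod_add]
    have hJprod_ne : J.prod ≠ 0 := by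
      intro hc
      exact hNne0 0 (Multiset.mem_of_le hJN (Multiset.prod_eq_zero_iff.mp hc)) rfl
    have hNJprod_ne : (N - J).prod ≠ 0 := by
      intro hc
      exact hNne0 0 (Multiset.mem_of_le (Multiset.sub_le_self N J)
        (Multiset.prod_eq_zero_iff.mp hc)) rfl
    rw [hu, e1, e2]
    field_simp
  rw [hfinal]
  refine mul_mem huV (mul_mem ?_ ?_)
  · apply multiset_prod_mem_valuationSubring
    intro r hr
    exact hmemV hT r (by rwa [hJ] at hr)
  · exact hinv_mem (Multiset.sub_le_self N J)

/-- Abstract lifting step. -/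
lemma lift_embedding' {K A : Type*} [Field K] [CommRing A] [IsDomain A] [Algebra K A]
    [NoZeroSMulDivisors K A] [Algebra.IsAlgebraic K A] (φ : K →+* ℂ) :
    ∃ ψ : A →+* ℂ, ∀ k : K, ψ (algebraMap K A k) = φ k := by
  letI algKC : Algebra K ℂ := φ.toAlgebra
  haveI hns2 : NoZeroSMulDivisors K ℂ :=
    inferInstance
  exact ⟨(IsAlgClosed.lift : A →ₐ[K] ℂ).toRingHom, fun k => by
    show (IsAlgClosed.lift : A →ₐ[K] ℂ) (algebraMap K A k) = φ k
    rw [AlgHom.commutes]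
    rfl⟩

/-- Given `x` algebraic over `ℚ` and `z` a root of its minimal polynomial in `ℂ`, there
is an embedding of the ring of algebraic numbers into `ℂ` sending `x` to `z`. -/
lemma exists_conj_embedding {x z : ℂ} (hx : IsIntegral ℚ x)
    (hz : z ∈ ((minpoly ℚ x).map (algebraMap ℚ ℂ)).roots) :
    ∃ ψ : (integralClosure ℚ ℂ) →+* ℂ,
      Function.Injective ψ ∧
      ψ ⟨x, hx⟩ = z := by
  set p := minpoly ℚ x with hp
  have hirr : Irreducible p := minpoly.irreducible hx
  have hp0 : p ≠ 0 := minpoly.ne_zero hx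
  have hzeval : Polynomial.aeval z p = 0 := by
    have hmem := (Polynomial.mem_roots (by
      intro hc
      exact hp0 ((Polynomial.map_eq_zero_iff (algebraMap ℚ ℂ).injective).mp hc))).mp hz
    rwa [Polynomial.IsRoot, Polynomial.eval_map, ← Polynomial.aeval_def] at hmem
  haveI : Fact (Irreducible p) := ⟨hirr⟩
  set K₀ := AdjoinRoot p with hK₀
  set evx : K₀ →ₐ[ℚ] ℂ := AdjoinRoot.liftAlgHom p (Algebra.ofId ℚ ℂ) x
    (by have h := minpoly.aeval ℚ x; rwa [Polynomial.aeval_def] at h) with hevx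
  set evz : K₀ →ₐ[ℚ] ℂ := AdjoinRoot.liftAlgHom p (Algebra.ofId ℚ ℂ) z
    (by have h := hzeval; rwa [Polynomial.aeval_def] at h) with hevz
  letI algK₀ : Algebra K₀ ℂ := evx.toRingHom.toAlgebra
  haveI htower : IsScalarTower ℚ K₀ ℂ := IsScalarTower.of_algebraMap_eq (fun q => by
    show algebraMap ℚ ℂ q = evx (algebraMap ℚ K₀ q)
    rw [AlgHom.commutes])
  haveI hns1 : NoZeroSMulDivisors K₀ (integralClosure K₀ ℂ) := by
    exact inferInstance
  haveI halg : Algebra.IsAlgebraic K₀ (integralClosure K₀ ℂ) :=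
    ⟨fun s => (integralClosure.isIntegral s).isAlgebraic⟩
  obtain ⟨ψ₀, hcomm⟩ := lift_embedding' (A := integralClosure K₀ ℂ) evz.toRingHom
  have hsub : (integralClosure ℚ ℂ).toSubring ≤ (integralClosure K₀ ℂ).toSubring := by
    intro w hw
    have hw' : IsIntegral ℚ w := hw
    exact IsIntegral.tower_top (A := K₀) hw'
  set ψ : (integralClosure ℚ ℂ) →+* ℂ := ψ₀.comp (Subring.inclusion hsub) with hψ
  have hψval : ∀ u : (integralClosure ℚ ℂ), ψ u = ψ₀ ⟨(u : ℂ), hsub u.2⟩ := fun u => rfl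
  have hinj : Function.Injective ψ := by
    have hker : ∀ u : (integralClosure ℚ ℂ), ψ u = 0 → u = 0 := by
      intro u h0
      by_contra hu0
      have huval : (u : ℂ) ≠ 0 := fun hc => hu0 (Subtype.ext hc)
      have hui : IsIntegral ℚ ((u : ℂ)) := u.2
      have huinv : ((u : ℂ))⁻¹ ∈ integralClosure ℚ ℂ := hui.inv
      have hmul : u * ⟨(u : ℂ)⁻¹, huinv⟩ = 1 := Subtype.ext (mul_inv_cancel₀ huval)
      have := congrArg ψ hmul
      rw [map_mul, h0, zero_mul, map_one] at this
      exact zero_ne_one this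
    intro a b h
    have h2 : ψ (a - b) = 0 := by rw [RingHom.map_sub, h, sub_self]
    exact sub_eq_zero.mp (hker _ h2)
  refine ⟨ψ, hinj, ?_⟩
  rw [hψval]
  have hxroot : (algebraMap K₀ ℂ) (AdjoinRoot.root p) = x := by
    show evx (AdjoinRoot.root p) = x
    rw [hevx]; exact AdjoinRoot.liftAlgHom_root _ _ _ _
  have hgen : (⟨x, hsub hx⟩ : integralClosure K₀ ℂ)
      = algebraMap K₀ (integralClosure K₀ ℂ) (AdjoinRoot.root p) := by
    apply Subtype.ext
    exact hxroot.symm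
  rw [hgen, hcomm]
  show evz (AdjoinRoot.root p) = z
  rw [hevz]; exact AdjoinRoot.liftAlgHom_root _ _ _ _

lemma algebraMap_int_complex_injective : Function.Injective (algebraMap ℤ ℂ) := by
  rw [algebraMap_int_eq]
  exact fun x y h => Int.cast_injective h

-- multiset product lemmas over ℝ
lemma one_le_multiset_prod {s : Multiset ℝ} (h : ∀ x ∈ s, 1 ≤ x) : 1 ≤ s.prod := by
  induction s using Multiset.induction_on with
  | empty => simp
  | cons a t ih =>
    rw [Multiset.prod_cons]
    have h1 := h a (Multiset.mem_cons_self a t)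
    have h2 := ih fun x hx => h x (Multiset.mem_cons_of_mem hx)
    nlinarith
lemma multiset_prod_le_pow {s : Multiset ℝ} {c : ℝ} (h1 : ∀ x ∈ s, 1 ≤ x)
    (h2 : ∀ x ∈ s, x ≤ c) : s.prod ≤ c ^ (Multiset.card s) := by
  induction s using Multiset.induction_on with
  | empty => simp
  | cons a t ih =>
    rw [Multiset.prod_cons, Multiset.card_cons, pow_succ]
    have ha1 := h1 a (Multiset.mem_cons_self a t)
    have hac := h2 a (Multiset.mem_cons_self a t)
    have ht1 : (1:ℝ) ≤ t.prod := one_le_multiset_prod (fun x hx => h1 x (Multiset.mem_cons_of_mem hx))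
    have htc := ih (fun x hx => h1 x (Multiset.mem_cons_of_mem hx))
      (fun x hx => h2 x (Multiset.mem_cons_of_mem hx))
    have hc1 : (1:ℝ) ≤ c := le_trans ha1 hac
    calc a * t.prod ≤ c * c ^ Multiset.card t := by nlinarith
      _ = c ^ Multiset.card t * c := by ring
lemma multiset_prod_eq_pow_iff_forall {s : Multiset ℝ} {c : ℝ} (h1 : ∀ x ∈ s, 1 ≤ x)
    (h2 : ∀ x ∈ s, x ≤ c) (heq : s.prod = c ^ (Multiset.card s)) : ∀ x ∈ s, x = c := by
  induction s using Multiset.induction_on with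
  | empty => intro x hx; simp at hx
  | cons a t ih =>
    have ha1 := h1 a (Multiset.mem_cons_self a t)
    have hac := h2 a (Multiset.mem_cons_self a t)
    have ht1 : (1:ℝ) ≤ t.prod := one_le_multiset_prod (fun x hx => h1 x (Multiset.mem_cons_of_mem hx))
    have htc : t.prod ≤ c ^ Multiset.card t := multiset_prod_le_pow
      (fun x hx => h1 x (Multiset.mem_cons_of_mem hx)) (fun x hx => h2 x (Multiset.mem_cons_of_mem hx))
    have hc1 : (1:ℝ) ≤ c := le_trans ha1 hac
    rw [Multiset.prod_cons, Multiset.card_cons, pow_succ] at heq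
    have hae : a = c := by nlinarith
    have hte : t.prod = c ^ Multiset.card t := by
      rw [hae] at heq
      have hc0 : (0:ℝ) < c := by linarith
      apply mul_left_cancel₀ hc0.ne'
      rw [heq]
      ring
    intro x hx
    rcases Multiset.mem_cons.mp hx with rfl | hx'
    · exact hae
    · exact ih (fun y hy => h1 y (Multiset.mem_cons_of_mem hy))
        (fun y hy => h2 y (Multiset.mem_cons_of_mem hy)) hte x hx'

/-- Uniqueness of the integer minimal polynomial for algebraic integers. -/
lemma isIntMinpoly_eq_minpoly {x : ℂ} (hx : IsIntegral ℤ x) {P : Polynomial ℤ}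
    (hP : IsIntMinpoly x P) : P = minpoly ℤ x := by
  have hdvd : minpoly ℤ x ∣ P := minpoly.isIntegrallyClosed_dvd hx hP.2.2
  obtain ⟨u, hu⟩ := hdvd
  have hmon := minpoly.monic hx
  have hnotunit : ¬ IsUnit (minpoly ℤ x) := by
    intro hc
    have h1 := Polynomial.natDegree_eq_zero_of_isUnit hc
    have h2 := minpoly.natDegree_pos hx
    omega
  have hu' : IsUnit u := (hP.1.isUnit_or_isUnit hu).resolve_left hnotunit
  obtain ⟨c, hc, hcu⟩ := Polynomial.isUnit_iff.mp hu'
  rcases Int.isUnit_iff.mp hc with h1 | h1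
  · rw [hu, ← hcu, h1]
    simp
  · exfalso
    have hlead : P.leadingCoeff = -1 := by
      rw [hu, ← hcu, h1]
      simp [Polynomial.leadingCoeff_mul, hmon.leadingCoeff]
    have := hP.2.1
    rw [hlead] at this
    omega

lemma isIntMinpoly_minpoly {x : ℂ} (hx : IsIntegral ℤ x) : IsIntMinpoly x (minpoly ℤ x) :=
  ⟨minpoly.irreducible hx, by rw [(minpoly.monic hx).leadingCoeff]; norm_num,
    minpoly.aeval ℤ x⟩

lemma cnorm_multiset_prod (s : Multiset ℂ) : ‖s.prod‖ = (s.map (fun z => ‖z‖)).prod := by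
  induction s using Multiset.induction_on with
  | empty => simp
  | cons a t ih => simp [ih]

/-- Explicit formula for the height of an algebraic integer. -/
lemma height_formula {x : ℂ} (hx : IsIntegral ℤ x) :
    height x = ((((minpoly ℤ x).map (algebraMap ℤ ℂ)).roots.map
      (fun z => max 1 ‖z‖)).prod) ^ ((((minpoly ℤ x).natDegree : ℝ))⁻¹) := by
  have hex : ∃ P, IsIntMinpoly x P := ⟨minpoly ℤ x, isIntMinpoly_minpoly hx⟩
  rw [height, dif_pos hex]
  have hch : hex.choose = minpoly ℤ x := isIntMinpoly_eq_minpoly hx hex.choose_spec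
  rw [hch]
  unfold zMahler cMahler
  have hlc : ((minpoly ℤ x).map (algebraMap ℤ ℂ)).leadingCoeff = 1 := by
    rw [Polynomial.leadingCoeff_map_of_injective algebraMap_int_complex_injective,
      (minpoly.monic hx).leadingCoeff]
    simp
  rw [hlc]
  simp

lemma card_roots_minpoly {x : ℂ} (hx : IsIntegral ℤ x) :
    Multiset.card (((minpoly ℤ x).map (algebraMap ℤ ℂ)).roots) = (minpoly ℤ x).natDegree := by
  have h1 := Polynomial.splits_iff_card_roots.mp
    (IsAlgClosed.splits ((minpoly ℤ x).map (algebraMap ℤ ℂ)))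
  rw [h1, Polynomial.natDegree_map_eq_of_injective algebraMap_int_complex_injective]

/-- Upper bound for the height of a real algebraic integer whose conjugates are bounded. -/
lemma height_le_of_conj_bound {b : ℝ} (hb : 1 ≤ b) (hint : IsIntegral ℤ (b : ℂ))
    (hroots : ∀ z ∈ ((minpoly ℤ (b:ℂ)).map (algebraMap ℤ ℂ)).roots, ‖z‖ ≤ b) :
    height (b:ℂ) ≤ b := by
  set D := (minpoly ℤ (b:ℂ)).natDegree with hD
  have hDpos : 0 < D := minpoly.natDegree_pos hint
  rw [height_formula hint]
  set s := ((minpoly ℤ (b:ℂ)).map (algebraMap ℤ ℂ)).roots.map (fun z => max 1 ‖z‖)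
    with hs
  have h1 : ∀ y ∈ s, 1 ≤ y := by
    intro y hy
    obtain ⟨z, _, rfl⟩ := Multiset.mem_map.mp hy
    exact le_max_left _ _
  have h2 : ∀ y ∈ s, y ≤ b := by
    intro y hy
    obtain ⟨z, hz, rfl⟩ := Multiset.mem_map.mp hy
    exact max_le hb (hroots z hz)
  have hcard : Multiset.card s = D := by
    rw [hs, Multiset.card_map, card_roots_minpoly hint]
  have hle : s.prod ≤ b ^ D := by
    rw [← hcard]
    exact multiset_prod_le_pow h1 h2
  calc s.prod ^ ((D:ℝ))⁻¹ ≤ (b ^ D) ^ ((D:ℝ))⁻¹ := by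
        apply Real.rpow_le_rpow (le_trans zero_le_one (one_le_multiset_prod h1)) hle
        positivity
    _ = b := by
        rw [← Real.rpow_natCast b D, ← Real.rpow_mul (by linarith)]
        rw [mul_inv_cancel₀ (by exact_mod_cast hDpos.ne')]
        exact Real.rpow_one b

/-- The height equals `b` when all conjugates have absolute value exactly `b`. -/
lemma height_eq_of_conj_eq {b : ℝ} (hb : 1 ≤ b) (hint : IsIntegral ℤ (b : ℂ))
    (hroots : ∀ z ∈ ((minpoly ℤ (b:ℂ)).map (algebraMap ℤ ℂ)).roots, ‖z‖ = b) :
    height (b:ℂ) = b := by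
  set D := (minpoly ℤ (b:ℂ)).natDegree with hD
  have hDpos : 0 < D := minpoly.natDegree_pos hint
  rw [height_formula hint]
  have hprod : (((minpoly ℤ (b:ℂ)).map (algebraMap ℤ ℂ)).roots.map
      (fun z => max 1 ‖z‖)).prod = b ^ D := by
    have : ((minpoly ℤ (b:ℂ)).map (algebraMap ℤ ℂ)).roots.map
        (fun z => max 1 ‖z‖) = ((minpoly ℤ (b:ℂ)).map (algebraMap ℤ ℂ)).roots.map
        (fun _ => b) := by
      apply Multiset.map_congr rfl
      intro z hz
      rw [hroots z hz, max_eq_right hb]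
    rw [this, Multiset.map_const', Multiset.prod_replicate, card_roots_minpoly hint]
  rw [hprod, ← Real.rpow_natCast b D, ← Real.rpow_mul (by linarith)]
  rw [mul_inv_cancel₀ (by exact_mod_cast hDpos.ne')]
  exact Real.rpow_one b

lemma roots_int_eq_roots_rat {x : ℂ} (hint : IsIntegral ℤ x) :
    ((minpoly ℤ x).map (algebraMap ℤ ℂ)).roots = ((minpoly ℚ x).map (algebraMap ℚ ℂ)).roots := by
  rw [minpoly.isIntegrallyClosed_eq_field_fractions' ℚ hint, Polynomial.map_map,
    ← IsScalarTower.algebraMap_eq]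

/-- If `b ≥ 1` is real with `b ^ q` a natural number, then `height b = b`. -/
lemma height_eq_self_of_pow_nat {b : ℝ} (hb : 1 ≤ b) {q m : ℕ} (hq : 0 < q)
    (hm : b ^ q = (m : ℝ)) : height (b:ℂ) = b := by
  have hbC : ((b:ℂ)) ^ q = ((m:ℕ) : ℂ) := by
    exact_mod_cast congrArg (fun t : ℝ => (t : ℂ)) hm
  have hint : IsIntegral ℤ (b:ℂ) := by
    apply (IsIntegral.pow_iff hq).mp
    rw [hbC]
    have : ((m:ℕ) : ℂ) = algebraMap ℤ ℂ (m : ℤ) := by push_cast; ring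
    rw [this]
    exact isIntegral_algebraMap
  apply height_eq_of_conj_eq hb hint
  intro z hz
  rw [roots_int_eq_roots_rat hint] at hz
  have hQint : IsIntegral ℚ (b:ℂ) := hint.tower_top
  obtain ⟨ψ, hinj, hψx⟩ := exists_conj_embedding hQint hz
  have hpow : (⟨(b:ℂ), hQint⟩ : integralClosure ℚ ℂ) ^ q
      = ((m : ℕ) : integralClosure ℚ ℂ) := by
    apply Subtype.ext
    push_cast
    exact_mod_cast hbC
  have hzq : z ^ q = ((m:ℕ) : ℂ) := by
    rw [← hψx, ← map_pow, hpow, map_natCast]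
  have habs : ‖z‖ ^ q = b ^ q := by
    have h1 : ‖z ^ q‖ = ‖((m:ℕ) : ℂ)‖ := congrArg norm hzq
    rw [norm_pow, Complex.norm_natCast] at h1
    rw [h1, hm]
  have h0z : 0 ≤ ‖z‖ := norm_nonneg z
  have h0b : (0:ℝ) ≤ b := by linarith
  exact le_antisymm ((pow_le_pow_iff_left₀ h0z h0b hq.ne').mp habs.le)
    ((pow_le_pow_iff_left₀ h0b h0z hq.ne').mp habs.ge)

-- pointwise product comparison
lemma multiset_prod_nonneg {s : Multiset ℝ} (h : ∀ x ∈ s, 0 ≤ x) : 0 ≤ s.prod := by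
  induction s using Multiset.induction_on with
  | empty => simp
  | cons a t ih =>
    rw [Multiset.prod_cons]
    exact mul_nonneg (h a (Multiset.mem_cons_self a t))
      (ih fun x hx => h x (Multiset.mem_cons_of_mem hx))

lemma multiset_prod_map_le {s : Multiset ℂ} {f g : ℂ → ℝ} (h0 : ∀ x ∈ s, 0 ≤ f x)
    (h : ∀ x ∈ s, f x ≤ g x) : (s.map f).prod ≤ (s.map g).prod := by
  induction s using Multiset.induction_on with
  | empty => simp
  | cons a t ih =>
    simp only [Multiset.map_cons, Multiset.prod_cons]
    have h1 := h0 a (Multiset.mem_cons_self a t)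
    have h2 := h a (Multiset.mem_cons_self a t)
    have h3 : (0:ℝ) ≤ (t.map f).prod := multiset_prod_nonneg (by
      intro x hx
      obtain ⟨y, hy, rfl⟩ := Multiset.mem_map.mp hx
      exact h0 y (Multiset.mem_cons_of_mem hy))
    have h4 := ih (fun x hx => h0 x (Multiset.mem_cons_of_mem hx))
      (fun x hx => h x (Multiset.mem_cons_of_mem hx))
    have h5 : (0:ℝ) ≤ g a := le_trans h1 h2
    nlinarith

lemma coe_pmap : ∀ (s : Multiset ℂ) (H : ∀ r ∈ s, IsIntegral ℚ r),
    ((s.pmap (fun r h => (⟨r, h⟩ : integralClosure ℚ ℂ)) H).map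
      (fun u : integralClosure ℚ ℂ => (u : ℂ))) = s := by
  intro s
  induction s using Multiset.induction_on with
  | empty => intro H; rfl
  | cons a t ih =>
    intro H
    erw [Multiset.pmap_cons, Multiset.map_cons, ih]

/-- Main bound: the height of an algebraic number is an algebraic integer `≥ 1` all of
whose conjugates are bounded by it. -/
lemma height_main_facts {α : ℂ} (hex : ∃ P : Polynomial ℤ, IsIntMinpoly α P) :
    1 ≤ height α ∧ IsIntegral ℤ ((height α : ℝ) : ℂ) ∧
    (∀ z ∈ ((minpoly ℤ ((height α : ℝ) : ℂ)).map (algebraMap ℤ ℂ)).roots,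
        ‖z‖ ≤ height α) := by
  classical
  obtain ⟨P₀, hP₀⟩ := hex
  have hex' : ∃ P : Polynomial ℤ, IsIntMinpoly α P := ⟨P₀, hP₀⟩
  set P := hex'.choose with hPdef
  have hP : IsIntMinpoly α P := hex'.choose_spec
  set a := P.leadingCoeff with ha
  have hapos : 0 < a := hP.2.1
  set fC := P.map (algebraMap ℤ ℂ) with hfC
  set R := fC.roots with hR
  set d := P.natDegree with hd
  -- degree is positive
  have hP0 : P ≠ 0 := hP.1.ne_zero
  have hdpos : 0 < d := by
    by_contra h0'
    have h0 : d = 0 := by omega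
    obtain ⟨c, hc⟩ : ∃ c, P = C c := ⟨P.coeff 0, (Polynomial.eq_C_of_natDegree_eq_zero h0)⟩
    have h1 := hP.2.2
    rw [hc, Polynomial.aeval_C, algebraMap_int_eq] at h1
    have hcz : c = 0 := by simpa using h1
    apply hP0
    rw [hc, hcz, map_zero]
  -- primitivity and separability
  have hprim : P.IsPrimitive := by
    intro r hr
    obtain ⟨t, ht⟩ := hr
    rcases hP.1.isUnit_or_isUnit ht with h | h
    · exact Polynomial.isUnit_C.mp h
    · exfalso
      have hdeg : P.natDegree = 0 := by
        rw [ht, Polynomial.natDegree_mul (fun hc => by simp [hc] at ht; exact hP0 ht) (fun hc => by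
          rw [hc, mul_zero] at ht; exact hP0 ht)]
        rw [Polynomial.natDegree_C, Polynomial.natDegree_eq_zero_of_isUnit h]
      omega
  have hirrQ : Irreducible (P.map (algebraMap ℤ ℚ)) := by
    rw [← Polynomial.IsPrimitive.irreducible_iff_irreducible_map_fraction_map hprim]
    exact hP.1
  have hnd : R.Nodup := by
    apply Polynomial.nodup_roots
    have hsep : (P.map (algebraMap ℤ ℚ)).Separable := hirrQ.separable
    have : fC = (P.map (algebraMap ℤ ℚ)).map (algebraMap ℚ ℂ) := by
      rw [hfC, Polynomial.map_map, ← IsScalarTower.algebraMap_eq]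
    rw [this]
    exact hsep.map
  -- basic facts about M
  set M := zMahler P with hM
  have hlcC : fC.leadingCoeff = ((a : ℤ) : ℂ) :=
    Polynomial.leadingCoeff_map_of_injective algebraMap_int_complex_injective P
  have hMeq : M = (a : ℝ) * (R.map (fun z => max 1 ‖z‖)).prod := by
    rw [hM]
    unfold zMahler cMahler
    rw [← hfC, hlcC, ← hR]
    congr 1
    rw [Complex.norm_intCast]
    rw [abs_of_pos (by exact_mod_cast hapos)]
  have hprod1 : (1:ℝ) ≤ (R.map (fun z => max 1 ‖z‖)).prod := by
    apply one_le_multiset_prod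
    intro x hx
    obtain ⟨z, _, rfl⟩ := Multiset.mem_map.mp hx
    exact le_max_left _ _
  have ha1 : (1:ℝ) ≤ (a:ℝ) := by exact_mod_cast hapos
  have hM1 : 1 ≤ M := by
    rw [hMeq]
    nlinarith
  have hM0 : (0:ℝ) ≤ M := by linarith
  -- height α = M ^ (1/d)
  have hheight : height α = M ^ ((d : ℝ))⁻¹ := by
    rw [height, dif_pos hex']
  set β := height α with hβ
  have hβ1 : 1 ≤ β := by
    rw [hheight]
    calc (1:ℝ) = (1:ℝ) ^ ((d:ℝ))⁻¹ := (Real.one_rpow _).symm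
      _ ≤ M ^ ((d : ℝ))⁻¹ := Real.rpow_le_rpow zero_le_one hM1 (by positivity)
  have hβ0 : (0:ℝ) ≤ β := by linarith
  have hβd : β ^ d = M := by
    rw [hheight, ← Real.rpow_natCast (M ^ ((d : ℝ))⁻¹) d, ← Real.rpow_mul hM0]
    rw [inv_mul_cancel₀ (by exact_mod_cast hdpos.ne' : (d:ℝ) ≠ 0)]
    exact Real.rpow_one M
  -- the filtered multiset
  set S := R.filter (fun z => 1 ≤ ‖z‖) with hS
  have hSle : S ≤ R := Multiset.filter_le _ _
  -- |a * S.prod| = M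
  have habsprod : (a : ℝ) * (S.map (fun z : ℂ => ‖z‖)).prod = M := by
    rw [hMeq]
    congr 1
    have hsplit : R.filter (fun z => 1 ≤ ‖z‖)
        + R.filter (fun z => ¬ 1 ≤ ‖z‖) = R := Multiset.filter_add_not _ _
    have : (R.map (fun z => max 1 ‖z‖)).prod
        = ((S.map (fun z => max 1 ‖z‖)).prod
          * ((R.filter (fun z => ¬ 1 ≤ ‖z‖)).map
              (fun z => max 1 ‖z‖)).prod) := by
      rw [← Multiset.prod_add, ← Multiset.map_add, hS, hsplit]
    rw [this]
    have h1 : (S.map (fun z => max 1 ‖z‖)) = S.map (fun z : ℂ => ‖z‖) := by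
      apply Multiset.map_congr rfl
      intro z hz
      exact max_eq_right (Multiset.mem_filter.mp hz).2
    have h2 : ((R.filter (fun z => ¬ 1 ≤ ‖z‖)).map
        (fun z => max 1 ‖z‖)) = (R.filter (fun z => ¬ 1 ≤ ‖z‖)).map
        (fun _ => (1:ℝ)) := by
      apply Multiset.map_congr rfl
      intro z hz
      exact max_eq_left (le_of_lt (lt_of_not_ge (Multiset.mem_filter.mp hz).2))
    rw [h1, h2, Multiset.map_const', Multiset.prod_replicate, one_pow, mul_one]
  -- the conjugate multiset
  have hconjC : fC.map (starRingEnd ℂ) = fC := by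
    rw [hfC, Polynomial.map_map]
    congr 1
    ext n
    simp
  have hRconj : R.map (starRingEnd ℂ) = R := by
    have h1 := (IsAlgClosed.splits fC).roots_map (starRingEnd ℂ)
    rw [hconjC] at h1
    exact h1.symm
  have hS'le : S.map (starRingEnd ℂ) ≤ R := by
    calc S.map (starRingEnd ℂ) ≤ R.map (starRingEnd ℂ) := Multiset.map_le_map hSle
      _ = R := hRconj
  -- integrality of s and conj s
  have hsint : IsIntegral ℤ ((a : ℂ) * S.prod) :=
    leadingCoeff_mul_prod_subroots_isIntegral hnd hSle
  have hsint' : IsIntegral ℤ ((a : ℂ) * (S.map (starRingEnd ℂ)).prod) :=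
    leadingCoeff_mul_prod_subroots_isIntegral hnd hS'le
  set sC := (a : ℂ) * S.prod with hsC
  have hconj_sC : (starRingEnd ℂ) sC = (a : ℂ) * (S.map (starRingEnd ℂ)).prod := by
    rw [hsC, map_mul, map_intCast, map_multiset_prod]
  have habs_sC : ‖sC‖ = M := by
    rw [hsC, norm_mul, cnorm_multiset_prod, Complex.norm_intCast,
      abs_of_pos (by exact_mod_cast hapos : (0:ℝ) < ((a:ℤ):ℝ))]
    exact habsprod
  have hkey : ((β : ℂ)) ^ (2 * d) = sC * (starRingEnd ℂ) sC := by
    rw [Complex.mul_conj]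
    have h1 : Complex.normSq sC = M ^ 2 := by
      rw [← Complex.sq_norm, habs_sC]
    rw [h1]
    have h2 : β ^ (2 * d) = M ^ 2 := by
      rw [two_mul, pow_add, hβd, ← pow_two]
    push_cast [← h2]
    norm_num
  -- integrality of β
  have hint : IsIntegral ℤ ((β : ℂ)) := by
    apply (IsIntegral.pow_iff (by omega : 0 < 2 * d)).mp
    rw [hkey, hconj_sC]
    exact hsint.mul hsint'
  refine ⟨hβ1, hint, ?_⟩
  -- the conjugate bound
  intro z hz
  rw [roots_int_eq_roots_rat hint] at hz
  have hQint : IsIntegral ℚ ((β:ℂ)) := hint.tower_top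
  obtain ⟨ψ, hψinj, hψβ⟩ := exists_conj_embedding hQint hz
  -- all roots are integral over ℚ
  have hfC0 : fC ≠ 0 := fun hc =>
    hP0 ((Polynomial.map_eq_zero_iff algebraMap_int_complex_injective).mp hc)
  have hfactor : fC = (P.map (algebraMap ℤ ℚ)).map (algebraMap ℚ ℂ) := by
    rw [hfC, Polynomial.map_map, ← IsScalarTower.algebraMap_eq]
  have hRrootP : ∀ r ∈ R, Polynomial.aeval r P = 0 := by
    intro r hr
    have hroot : fC.eval r = 0 := (Polynomial.mem_roots hfC0).mp hr
    rw [hfC, Polynomial.eval_map, ← Polynomial.aeval_def] at hroot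
    exact hroot
  have hRint : ∀ r ∈ R, IsIntegral ℚ r := by
    intro r hr
    apply IsAlgebraic.isIntegral
    refine ⟨P.map (algebraMap ℤ ℚ), ?_, ?_⟩
    · intro hc
      have hZQinj : Function.Injective (algebraMap ℤ ℚ) := by
        rw [algebraMap_int_eq]
        exact fun x y h => Int.cast_injective h
      exact hP0 ((Polynomial.map_eq_zero_iff hZQinj).mp hc)
    · have hroot : fC.eval r = 0 := (Polynomial.mem_roots hfC0).mp hr
      rw [hfactor, Polynomial.eval_map, ← Polynomial.aeval_def] at hroot
      exact hroot
  -- lift the multisets into the algebraic numbers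
  have hSint : ∀ r ∈ S, IsIntegral ℚ r := fun r hr => hRint r (Multiset.mem_of_le hSle hr)
  have hS'int : ∀ r ∈ S.map (starRingEnd ℂ), IsIntegral ℚ r :=
    fun r hr => hRint r (Multiset.mem_of_le hS'le hr)
  set SA : Multiset (integralClosure ℚ ℂ) :=
    S.pmap (fun r hr => (⟨r, hr⟩ : integralClosure ℚ ℂ)) hSint with hSA
  set SA' : Multiset (integralClosure ℚ ℂ) :=
    (S.map (starRingEnd ℂ)).pmap (fun r hr => (⟨r, hr⟩ : integralClosure ℚ ℂ)) hS'int
    with hSA'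
  have hcoeSA : SA.map (fun u : integralClosure ℚ ℂ => (u : ℂ)) = S := coe_pmap S hSint
  have hcoeSA' : SA'.map (fun u : integralClosure ℚ ℂ => (u : ℂ)) = S.map (starRingEnd ℂ) :=
    coe_pmap _ hS'int
  have hprodSA : ((SA.prod : integralClosure ℚ ℂ) : ℂ) = S.prod := by
    rw [← hcoeSA]
    exact map_multiset_prod ((integralClosure ℚ ℂ).val) SA
  have hprodSA' : ((SA'.prod : integralClosure ℚ ℂ) : ℂ) = (S.map (starRingEnd ℂ)).prod := by
    rw [← hcoeSA']
    exact map_multiset_prod ((integralClosure ℚ ℂ).val) SA'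
  have hAeq : (⟨(β:ℂ), hQint⟩ : integralClosure ℚ ℂ) ^ (2*d)
      = (((a : ℤ) : integralClosure ℚ ℂ) * SA.prod)
        * (((a : ℤ) : integralClosure ℚ ℂ) * SA'.prod) := by
    apply Subtype.ext
    push_cast [hprodSA, hprodSA']
    rw [hkey, hconj_sC, hsC]
  have hψa : ψ (((a : ℤ) : integralClosure ℚ ℂ)) = ((a:ℤ):ℂ) := map_intCast ψ a
  have hzeq : z ^ (2*d) = ((a:ℂ) * (SA.map ψ).prod) * ((a:ℂ) * (SA'.map ψ).prod) := by
    have h1 := congrArg ψ hAeq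
    rw [map_pow, hψβ, map_mul, map_mul, map_mul, hψa,
      map_multiset_prod, map_multiset_prod] at h1
    exact h1
  -- bound on subproducts of roots
  have hFACT : ∀ {W : Multiset ℂ}, W ≤ R → (a:ℝ) * (W.map (fun z : ℂ => ‖z‖)).prod ≤ M := by
    intro W hW
    have h1 : (W.map (fun z : ℂ => ‖z‖)).prod ≤ (W.map (fun z => max 1 ‖z‖)).prod :=
      multiset_prod_map_le (fun x _ => norm_nonneg x) (fun x _ => le_max_right _ _)
    have h2 : (W.map (fun z => max 1 ‖z‖)).prod
        ≤ (R.map (fun z => max 1 ‖z‖)).prod := by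
      have hsplit : R - W + W = R := tsub_add_cancel_of_le hW
      have : (R.map (fun z => max 1 ‖z‖)).prod
          = ((R - W).map (fun z => max 1 ‖z‖)).prod
            * (W.map (fun z => max 1 ‖z‖)).prod := by
        rw [← Multiset.prod_add, ← Multiset.map_add, hsplit]
      rw [this]
      have hge1 : (1:ℝ) ≤ ((R - W).map (fun z => max 1 ‖z‖)).prod := by
        apply one_le_multiset_prod
        intro x hx
        obtain ⟨y, _, rfl⟩ := Multiset.mem_map.mp hx
        exact le_max_left _ _
      have hge0 : (0:ℝ) ≤ (W.map (fun z => max 1 ‖z‖)).prod := by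
        apply multiset_prod_nonneg
        intro x hx
        obtain ⟨y, _, rfl⟩ := Multiset.mem_map.mp hx
        exact le_trans zero_le_one (le_max_left _ _)
      nlinarith
    rw [hMeq]
    have := le_trans h1 h2
    nlinarith
  -- the image multisets are sub-multisets of R
  have hWle : ∀ (T : Multiset (integralClosure ℚ ℂ)), T.Nodup →
      (∀ u ∈ T, Polynomial.aeval ((u : integralClosure ℚ ℂ) : ℂ) P = 0) →
      T.map ψ ≤ R := by
    intro T hTnd hTroot
    apply (Multiset.le_iff_subset (hTnd.map hψinj)).mpr
    intro w hw
    obtain ⟨u, hu, rfl⟩ := Multiset.mem_map.mp hw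
    set ι : (integralClosure ℚ ℂ) →+* ℂ := ((integralClosure ℚ ℂ).val : _ →ₐ[ℚ] ℂ).toRingHom
      with hι
    have hι_inj : Function.Injective ι := fun p q h => Subtype.ext h
    set eA := Polynomial.eval₂ (algebraMap ℤ (integralClosure ℚ ℂ)) u P with heA
    have h2 : ι eA = Polynomial.eval₂ (algebraMap ℤ ℂ) ((u : ℂ)) P := by
      rw [heA, Polynomial.hom_eval₂]
      congr 1 <;> exact Subsingleton.elim _ _
    have h2' : ι eA = 0 := by
      rw [h2]
      have h5 := hTroot u hu
      rw [Polynomial.aeval_def] at h5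
      exact h5
    have h1 : eA = 0 := hι_inj (by rw [h2']; simp)
    have h3 : Polynomial.aeval (ψ u) P = 0 := by
      have h4 : ψ eA = Polynomial.eval₂ (algebraMap ℤ ℂ) (ψ u) P := by
        rw [heA, Polynomial.hom_eval₂]
        congr 1 <;> exact Subsingleton.elim _ _
      rw [Polynomial.aeval_def, ← h4, h1, map_zero]
    rw [hR]
    apply (Polynomial.mem_roots hfC0).mpr
    show fC.eval (ψ u) = 0
    rw [hfC, Polynomial.eval_map, ← Polynomial.aeval_def]
    exact h3
  have hSAnd : SA.Nodup := by
    apply Multiset.Nodup.pmap ?_ (hnd.filter _)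
    intro a ha b hb hab
    exact congrArg Subtype.val hab
  have hSA'nd : SA'.Nodup := by
    apply Multiset.Nodup.pmap ?_ ((hnd.filter _).map_on ?_)
    · intro a ha b hb hab
      exact congrArg Subtype.val hab
    · intro a _ b _ hab
      exact (starRingEnd ℂ).injective hab
  have hSAroot : ∀ u ∈ SA, Polynomial.aeval ((u : integralClosure ℚ ℂ) : ℂ) P = 0 := by
    intro u hu
    have : (u : ℂ) ∈ S := by
      rw [← hcoeSA]
      exact Multiset.mem_map_of_mem _ hu
    exact hRrootP _ (Multiset.mem_of_le hSle this)
  have hSA'root : ∀ u ∈ SA', Polynomial.aeval ((u : integralClosure ℚ ℂ) : ℂ) P = 0 := by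
    intro u hu
    have : (u : ℂ) ∈ S.map (starRingEnd ℂ) := by
      rw [← hcoeSA']
      exact Multiset.mem_map_of_mem _ hu
    exact hRrootP _ (Multiset.mem_of_le hS'le this)
  have hW1 : (SA.map ψ) ≤ R := hWle SA hSAnd hSAroot
  have hW2 : (SA'.map ψ) ≤ R := hWle SA' hSA'nd hSA'root
  -- finish
  have habsz : ‖z‖ ^ (2*d) ≤ M * M := by
    have h1 := congrArg norm hzeq
    rw [norm_pow, norm_mul, norm_mul, norm_mul, Complex.norm_intCast,
      abs_of_pos (by exact_mod_cast hapos : (0:ℝ) < ((a:ℤ):ℝ)),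
      cnorm_multiset_prod, cnorm_multiset_prod] at h1
    rw [h1, Multiset.map_map, Multiset.map_map]
    have b1 := hFACT hW1
    have b2 := hFACT hW2
    rw [Multiset.map_map] at b1 b2
    have c1 : (0:ℝ) ≤ (a:ℝ) * (Multiset.map ((fun z : ℂ => ‖z‖) ∘ ψ) SA).prod := by
      apply mul_nonneg (by positivity)
      apply multiset_prod_nonneg
      intro x hx
      obtain ⟨y, _, rfl⟩ := Multiset.mem_map.mp hx
      exact norm_nonneg _
    have c2 : (0:ℝ) ≤ (a:ℝ) * (Multiset.map ((fun z : ℂ => ‖z‖) ∘ ψ) SA').prod := by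
      apply mul_nonneg (by positivity)
      apply multiset_prod_nonneg
      intro x hx
      obtain ⟨y, _, rfl⟩ := Multiset.mem_map.mp hx
      exact norm_nonneg _
    nlinarith [b1, b2, c1, c2, hM0]
  have hMββ : M * M = β ^ (2*d) := by
    rw [two_mul, pow_add, hβd]
  rw [hMββ] at habsz
  have h2d : 2 * d ≠ 0 := by omega
  exact (pow_le_pow_iff_left₀ (norm_nonneg z) hβ0 h2d).mp habsz

/-- for every `α ∈ ℚ̄`, `H(α) ≥ H(H(α))`, with equality if and only if
`H(α) = a^b` for some `a ∈ ℕ` and positive rational `b`. -/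
theorem stmt_18 (α : ℂ) (hα : IsAlgebraic ℚ α) :
    height ((height α : ℝ) : ℂ) ≤ height α ∧
    (height ((height α : ℝ) : ℂ) = height α ↔
      ∃ a : ℕ, 0 < a ∧ ∃ b : ℚ, 0 < b ∧ height α = (a : ℝ) ^ (b : ℝ)) := by
  by_cases hex : ∃ P : Polynomial ℤ, IsIntMinpoly α P
  · obtain ⟨hβ1, hint, hbound⟩ := height_main_facts hex
    set β := height α with hβ
    have hβ0 : (0:ℝ) ≤ β := by linarith
    have hle : height ((β:ℝ):ℂ) ≤ β := height_le_of_conj_bound hβ1 hint hbound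
    refine ⟨hle, ?_, ?_⟩
    · -- forward direction
      intro heq
      set D := (minpoly ℤ ((β:ℝ):ℂ)).natDegree with hD
      have hDpos : 0 < D := minpoly.natDegree_pos hint
      have hDne : ((D:ℝ)) ≠ 0 := by exact_mod_cast hDpos.ne'
      set s := ((minpoly ℤ ((β:ℝ):ℂ)).map (algebraMap ℤ ℂ)).roots.map
        (fun z => max 1 ‖z‖) with hs
      have hform := height_formula hint
      rw [heq] at hform
      have h1s : ∀ x ∈ s, 1 ≤ x := by
        intro x hx
        obtain ⟨z, _, rfl⟩ := Multiset.mem_map.mp hx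
        exact le_max_left _ _
      have h0s : (0:ℝ) ≤ s.prod := le_trans zero_le_one (one_le_multiset_prod h1s)
      have hprod : s.prod = β ^ D := by
        have h2 : β ^ D = (s.prod ^ (((D:ℝ))⁻¹)) ^ (D:ℕ) := by rw [← hform]
        rw [← Real.rpow_natCast (s.prod ^ (((D:ℝ))⁻¹)) D, ← Real.rpow_mul h0s,
          inv_mul_cancel₀ hDne, Real.rpow_one] at h2
        exact h2.symm
      have h2s : ∀ x ∈ s, x ≤ β := by
        intro x hx
        obtain ⟨z, hz, rfl⟩ := Multiset.mem_map.mp hx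
        exact max_le hβ1 (hbound z hz)
      have hall : ∀ x ∈ s, x = β := by
        apply multiset_prod_eq_pow_iff_forall h1s h2s
        rw [hs, Multiset.card_map, card_roots_minpoly hint]
        exact hprod
      by_cases hβeq1 : β = 1
      · exact ⟨1, one_pos, 1, one_pos, by rw [hβeq1]; norm_num⟩
      · have hβgt : 1 < β := lt_of_le_of_ne hβ1 (Ne.symm hβeq1)
        have habs : ∀ z ∈ ((minpoly ℤ ((β:ℝ):ℂ)).map (algebraMap ℤ ℂ)).roots,
            ‖z‖ = β := by
          intro z hz
          have h3 := hall (max 1 ‖z‖) (Multiset.mem_map_of_mem _ hz)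
          rcases le_or_gt ‖z‖ 1 with h | h
          · exfalso
            rw [max_eq_left h] at h3
            exact hβeq1 h3.symm
          · rwa [max_eq_right h.le] at h3
        have hmonic : ((minpoly ℤ ((β:ℝ):ℂ)).map (algebraMap ℤ ℂ)).Monic :=
          (minpoly.monic hint).map _
        have hsplits := IsAlgClosed.splits ((minpoly ℤ ((β:ℝ):ℂ)).map (algebraMap ℤ ℂ))
        have hc0 := hsplits.coeff_zero_eq_prod_roots_of_monic hmonic
        have habs0 : ‖((minpoly ℤ ((β:ℝ):ℂ)).map (algebraMap ℤ ℂ)).coeff 0‖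
            = β ^ D := by
          rw [hc0, norm_mul, norm_pow]
          have hm1 : ‖(-1 : ℂ)‖ = 1 := by simp
          rw [hm1, one_pow, one_mul, cnorm_multiset_prod]
          have : ((minpoly ℤ ((β:ℝ):ℂ)).map (algebraMap ℤ ℂ)).roots.map (fun z : ℂ => ‖z‖)
              = ((minpoly ℤ ((β:ℝ):ℂ)).map (algebraMap ℤ ℂ)).roots.map (fun _ => β) := by
            apply Multiset.map_congr rfl
            exact habs
          rw [this, Multiset.map_const', Multiset.prod_replicate, card_roots_minpoly hint]
        set n0 := (minpoly ℤ ((β:ℝ):ℂ)).coeff 0 with hn0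
        have hcoeffmap : ((minpoly ℤ ((β:ℝ):ℂ)).map (algebraMap ℤ ℂ)).coeff 0
            = ((n0 : ℤ):ℂ) := Polynomial.coeff_map _ 0
        have hnat : ((n0.natAbs : ℕ) : ℝ) = β ^ D := by
          rw [hcoeffmap, Complex.norm_intCast] at habs0
          rw [Nat.cast_natAbs, Int.cast_abs]
          exact habs0
        have hβD1 : (1:ℝ) ≤ β ^ D := by
          calc (1:ℝ) = 1 ^ D := (one_pow D).symm
            _ ≤ β ^ D := pow_le_pow_left₀ zero_le_one hβ1 D
        refine ⟨n0.natAbs, ?_, ((D:ℚ))⁻¹, ?_, ?_⟩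
        · by_contra h
          have h4 : n0.natAbs = 0 := by omega
          rw [h4] at hnat
          simp at hnat
          nlinarith
        · apply inv_pos.mpr
          exact_mod_cast hDpos
        · have hcast : ((((D:ℚ))⁻¹ : ℚ) : ℝ) = ((D:ℝ))⁻¹ := by push_cast; ring
          rw [hcast, hnat]
          show β = (β ^ D) ^ (((D:ℝ))⁻¹)
          rw [← Real.rpow_natCast β D, ← Real.rpow_mul hβ0, mul_inv_cancel₀ hDne,
            Real.rpow_one]
    · -- backward direction
      rintro ⟨a, hapos, b, hbpos, habe⟩
      have hq : 0 < b.den := b.den_pos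
      have hnum : 0 < b.num := Rat.num_pos.mpr hbpos
      have ha0 : (0:ℝ) ≤ (a:ℝ) := by positivity
      have hbden : ((b:ℝ)) * ((b.den : ℕ):ℝ) = ((b.num.toNat : ℕ) : ℝ) := by
        have h1 : ((b:ℝ)) = ((b.num : ℤ):ℝ) / ((b.den : ℕ):ℝ) := by
          exact_mod_cast congrArg (fun q : ℚ => (q : ℝ)) (Rat.num_div_den b).symm
        have h2 : ((b.den : ℕ):ℝ) ≠ 0 := by
          exact_mod_cast hq.ne'
        rw [h1]
        field_simp
        exact_mod_cast (Int.toNat_of_nonneg hnum.le).symm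
      have hkey : β ^ (b.den : ℕ) = ((a ^ b.num.toNat : ℕ) : ℝ) := by
        rw [habe, ← Real.rpow_natCast ((a:ℝ) ^ ((b:ℚ):ℝ)) b.den, ← Real.rpow_mul ha0,
          hbden, Real.rpow_natCast]
        push_cast
        ring
      exact height_eq_self_of_pow_nat hβ1 hq hkey
  · have hα1 : height α = 1 := by rw [height, dif_neg hex]
    rw [hα1]
    have h1 : height ((1:ℝ):ℂ) = 1 :=
      height_eq_self_of_pow_nat le_rfl (q := 1) (m := 1) one_pos (by norm_num)
    constructor
    · rw [h1]
    · constructor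
      · intro _
        exact ⟨1, one_pos, 1, one_pos, by norm_num⟩
      · intro _
        rw [h1]
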